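/- If (L,R) and (L',R') are factorization systems on a finite lattice P with λ^{(L,R)} = λ^{(L',R')}, then the meet (L,R) ∧ (L',R') = (⊥(R∩R'), R∩R') in Fac(P) has the same cocharacteristic function: λ^{(L,R)∧(L',R')} = λ^{(L,R)}. -/
import Mathlib


/-- A (weak = orthogonal) factorization system on a poset `P`, viewed as a thin category:
a pair of classes of relations `(L, R)` refining `≤` such that every relation factors as a
left relation followed by a right relation, and `L = ᗮR`, `R = Lᗮ` with respect to the
lifting property. -/
structure FacSys (P : Type*) [PartialOrder P] where
  L : P → P → Prop
  R : P → P → Prop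
  L_le : ∀ {x y}, L x y → x ≤ y
  R_le : ∀ {x y}, R x y → x ≤ y
  fact : ∀ {x y}, x ≤ y → ∃ z, L x z ∧ R z y
  L_iff : ∀ x y, L x y ↔ x ≤ y ∧ ∀ a b, R a b → x ≤ a → y ≤ b → y ≤ a
  R_iff : ∀ x y, R x y ↔ x ≤ y ∧ ∀ a b, L a b → a ≤ x → b ≤ y → b ≤ x

/-- If two factorization systems have the same cocharacteristic function, then so does
their meet in `Fac(P)`, whose right class is `R ∩ R'`. -/
theorem stmt7 {P : Type*} [Lattice P] [BoundedOrder P] [Finite P]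
    (F F' FM : FacSys P) (hM : ∀ a b, FM.R a b ↔ F.R a b ∧ F'.R a b)
    (lam lam' lamM : P → P)
    (hlam : ∀ x, F.L x (lam x) ∧ F.R (lam x) ⊤)
    (hlam' : ∀ x, F'.L x (lam' x) ∧ F'.R (lam' x) ⊤)
    (hlamM : ∀ x, FM.L x (lamM x) ∧ FM.R (lamM x) ⊤)
    (heq : lam = lam') :
    lamM = lam := by
  funext x
  have hRM : FM.R (lam x) ⊤ := by
    rw [hM]
    exact ⟨(hlam x).2, heq ▸ (hlam' x).2⟩
  have hLM : FM.L x (lam x) := by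
    rw [FM.L_iff]
    refine ⟨F.L_le (hlam x).1, fun a b hab hxa hb => ?_⟩
    exact ((F.L_iff x (lam x)).1 (hlam x).1).2 a b ((hM a b).1 hab).1 hxa hb
  apply le_antisymm
  · exact ((FM.L_iff x (lamM x)).1 (hlamM x).1).2 (lam x) ⊤ hRM (F.L_le (hlam x).1) le_top
  · exact ((FM.L_iff x (lam x)).1 hLM).2 (lamM x) ⊤ (hlamM x).2 (FM.L_le (hlamM x).1) le_top
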